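/- The bivariate generating function T(x,y) = Σ_{m,ℓ ≥ 0} T_{m,ℓ} x^m y^ℓ of non-crossing linear k-chord diagrams counted by size m and number of short chords ℓ satisfies the functional equation T(x,y) - 1 = x·T(x,y)^k - x(1-y)·T(x,y). -/

import Mathlib

open scoped Classical

/-- Two blocks cross if there are `a < b < c < d` with `a, c` in one block and
`b, d` in the other. -/
def Cross (B B' : Finset ℕ) : Prop :=
  ∃ a b c d : ℕ, a < b ∧ b < c ∧ c < d ∧
    ((a ∈ B ∧ c ∈ B ∧ b ∈ B' ∧ d ∈ B') ∨ (a ∈ B' ∧ c ∈ B' ∧ b ∈ B ∧ d ∈ B))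

/-- `Tcount k m ℓ` is the number of non-crossing linear `k`-chord diagrams of length
`k*m` (non-crossing partitions of `{0,...,k*m-1}` into blocks of size `k`) with exactly
`ℓ` short chords (blocks of `k` consecutive vertices). -/
noncomputable def Tcount (k m ℓ : ℕ) : ℕ :=
  Nat.card {P : Finpartition (Finset.range (k * m)) //
    (∀ B ∈ P.parts, B.card = k) ∧
    (∀ B ∈ P.parts, ∀ B' ∈ P.parts, B ≠ B' → ¬ Cross B B') ∧
    (P.parts.filter (fun B => ∃ i, B = Finset.Ico i (i + k))).card = ℓ}

/-- The bivariate generating function `T(x,y) = Σ T_{m,ℓ} x^m y^ℓ`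
(with `x = X 0`, `y = X 1`). -/
noncomputable def Tser (k : ℕ) : MvPowerSeries (Fin 2) ℚ :=
  fun d => (Tcount k (d 0) (d 1) : ℚ)


open Finset

section Aux

/-- blocks of size `k`, pairwise disjoint, noncrossing, covering `range n` -/
def IsDiag (k n : ℕ) (F : Finset (Finset ℕ)) : Prop :=
  (∀ B ∈ F, B.card = k) ∧
  (F : Set (Finset ℕ)).PairwiseDisjoint id ∧
  (∀ B ∈ F, ∀ B' ∈ F, B ≠ B' → ¬ Cross B B') ∧
  F.sup id = Finset.range n

noncomputable def sc (k : ℕ) (F : Finset (Finset ℕ)) : ℕ :=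
  (F.filter (fun B => ∃ i, B = Finset.Ico i (i + k))).card

noncomputable def DS (k n ℓ : ℕ) : Finset (Finset (Finset ℕ)) :=
  ((Finset.range n).powerset.powerset).filter (fun F => IsDiag k n F ∧ sc k F = ℓ)

lemma blocks_subset {k n : ℕ} {F : Finset (Finset ℕ)} (h : IsDiag k n F) {B : Finset ℕ}
    (hB : B ∈ F) : B ⊆ Finset.range n := by
  have : id B ≤ F.sup id := Finset.le_sup hB
  rw [h.2.2.2] at this
  exact this

lemma mem_DS {k n ℓ : ℕ} {F : Finset (Finset ℕ)} :
    F ∈ DS k n ℓ ↔ IsDiag k n F ∧ sc k F = ℓ := by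
  constructor
  · exact fun h => (Finset.mem_filter.1 h).2
  · intro h
    refine Finset.mem_filter.2 ⟨?_, h⟩
    rw [Finset.mem_powerset]
    intro B hB
    rw [Finset.mem_powerset]
    exact blocks_subset h.1 hB

lemma IsDiag.mul_card {k n : ℕ} {F : Finset (Finset ℕ)} (h : IsDiag k n F) :
    F.card * k = n := by
  have h1 : F.sup id = F.biUnion id := Finset.sup_eq_biUnion F id
  have h2 : (F.biUnion id).card = ∑ B ∈ F, B.card := by
    rw [Finset.card_biUnion]
    · rfl
    · intro x hx y hy hxy
      exact h.2.1 (Finset.mem_coe.2 hx) (Finset.mem_coe.2 hy) hxy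
  have h3 : ∑ B ∈ F, B.card = F.card * k := by
    rw [Finset.sum_congr rfl (fun B hB => h.1 B hB), Finset.sum_const, smul_eq_mul]
  have := h.2.2.2
  rw [h1] at this
  rw [← h3, ← h2, this, Finset.card_range]

lemma IsDiag.card_eq {k m : ℕ} (hk : 0 < k) {F : Finset (Finset ℕ)}
    (h : IsDiag k (k * m) F) : F.card = m := by
  have := h.mul_card
  have hkm : F.card * k = m * k := by rw [this]; ring
  exact Nat.eq_of_mul_eq_mul_right hk hkm

lemma isDiag_empty (k : ℕ) : IsDiag k 0 (∅ : Finset (Finset ℕ)) := by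
  refine ⟨by simp, by simp, by simp, by simp⟩

lemma sc_empty (k : ℕ) : sc k (∅ : Finset (Finset ℕ)) = 0 := by simp [sc]

lemma tcount_eq {k : ℕ} (hk : 1 ≤ k) (m ℓ : ℕ) : Tcount k m ℓ = (DS k (k * m) ℓ).card := by
  rw [Tcount, ← Nat.card_eq_finsetCard]
  apply Nat.card_congr
  refine ⟨fun P => ⟨P.1.parts, ?_⟩, fun F => ⟨⟨F.1, ?_, ?_, ?_⟩, ?_, ?_, ?_⟩, ?_, ?_⟩
  · rcases P with ⟨P, h1, h2, h3⟩
    refine mem_DS.2 ⟨⟨h1, ?_, h2, P.sup_parts⟩, h3⟩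
    exact Finset.supIndep_iff_pairwiseDisjoint.1 P.supIndep
  · exact Finset.supIndep_iff_pairwiseDisjoint.2 (mem_DS.1 F.2).1.2.1
  · exact (mem_DS.1 F.2).1.2.2.2
  · intro hbot
    have := (mem_DS.1 F.2).1.1 _ hbot
    simp only [Finset.bot_eq_empty, Finset.card_empty] at this
    omega
  · exact (mem_DS.1 F.2).1.1
  · exact (mem_DS.1 F.2).1.2.2.1
  · exact (mem_DS.1 F.2).2
  · intro P
    apply Subtype.ext
    apply Finpartition.ext
    rfl
  · intro F
    rfl

lemma cross_comm {B B' : Finset ℕ} : Cross B B' ↔ Cross B' B := by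
  constructor <;> rintro ⟨a, b, c, d, h1, h2, h3, h4⟩ <;> exact ⟨a, b, c, d, h1, h2, h3, h4.symm⟩

lemma not_cross_sep {B B' : Finset ℕ} {u v : ℕ}
    (h1 : ∀ y ∈ B', u < y ∧ y < v) (h2 : ∀ x ∈ B, x ≤ u ∨ v ≤ x) : ¬ Cross B B' := by
  rintro ⟨a, b, c, d, hab, hbc, hcd, ⟨ha, hc, hb, hd⟩ | ⟨ha, hc, hb, hd⟩⟩
  · have e1 := h1 b hb
    have e2 := h1 d hd
    have e3 := h2 c hc
    omega
  · have e1 := h1 a ha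
    have e2 := h1 c hc
    have e3 := h2 b hb
    omega

lemma not_cross_of_lt {B B' : Finset ℕ} (h : ∀ x ∈ B, ∀ y ∈ B', x < y) : ¬ Cross B B' := by
  rintro ⟨a, b, c, d, hab, hbc, hcd, ⟨ha, hc, hb, hd⟩ | ⟨ha, hc, hb, hd⟩⟩
  · have := h c hc b hb
    omega
  · have := h d hd c hc
    omega

lemma cross_image_add {B B' : Finset ℕ} (t : ℕ) :
    Cross (B.image (· + t)) (B'.image (· + t)) ↔ Cross B B' := by
  constructor
  · rintro ⟨a, b, c, d, hab, hbc, hcd, ⟨ha, hc, hb, hd⟩ | ⟨ha, hc, hb, hd⟩⟩ <;>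
    · obtain ⟨a', ha', rfl⟩ := Finset.mem_image.1 ha
      obtain ⟨b', hb', rfl⟩ := Finset.mem_image.1 hb
      obtain ⟨c', hc', rfl⟩ := Finset.mem_image.1 hc
      obtain ⟨d', hd', rfl⟩ := Finset.mem_image.1 hd
      first
      | exact ⟨a', b', c', d', by omega, by omega, by omega,
          Or.inl ⟨ha', hc', hb', hd'⟩⟩
      | exact ⟨a', b', c', d', by omega, by omega, by omega,
          Or.inr ⟨ha', hc', hb', hd'⟩⟩
  · rintro ⟨a, b, c, d, hab, hbc, hcd, ⟨ha, hc, hb, hd⟩ | ⟨ha, hc, hb, hd⟩⟩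
    · exact ⟨a + t, b + t, c + t, d + t, by omega, by omega, by omega,
        Or.inl ⟨Finset.mem_image_of_mem _ ha, Finset.mem_image_of_mem _ hc,
          Finset.mem_image_of_mem _ hb, Finset.mem_image_of_mem _ hd⟩⟩
    · exact ⟨a + t, b + t, c + t, d + t, by omega, by omega, by omega,
        Or.inr ⟨Finset.mem_image_of_mem _ ha, Finset.mem_image_of_mem _ hc,
          Finset.mem_image_of_mem _ hb, Finset.mem_image_of_mem _ hd⟩⟩

lemma cross_of_cross_image_sub {B B' : Finset ℕ} {t : ℕ}
    (hB : ∀ x ∈ B, t ≤ x) (hB' : ∀ x ∈ B', t ≤ x) :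
    Cross (B.image (fun x => x - t)) (B'.image (fun x => x - t)) → Cross B B' := by
  rintro ⟨a, b, c, d, hab, hbc, hcd, ⟨ha, hc, hb, hd⟩ | ⟨ha, hc, hb, hd⟩⟩
  · obtain ⟨a', ha', rfl⟩ := Finset.mem_image.1 ha
    obtain ⟨b', hb', rfl⟩ := Finset.mem_image.1 hb
    obtain ⟨c', hc', rfl⟩ := Finset.mem_image.1 hc
    obtain ⟨d', hd', rfl⟩ := Finset.mem_image.1 hd
    have := hB a' ha'; have := hB c' hc'; have := hB' b' hb'; have := hB' d' hd'
    exact ⟨a', b', c', d', by omega, by omega, by omega, Or.inl ⟨ha', hc', hb', hd'⟩⟩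
  · obtain ⟨a', ha', rfl⟩ := Finset.mem_image.1 ha
    obtain ⟨b', hb', rfl⟩ := Finset.mem_image.1 hb
    obtain ⟨c', hc', rfl⟩ := Finset.mem_image.1 hc
    obtain ⟨d', hd', rfl⟩ := Finset.mem_image.1 hd
    have := hB' a' ha'; have := hB' c' hc'; have := hB b' hb'; have := hB d' hd'
    exact ⟨a', b', c', d', by omega, by omega, by omega, Or.inr ⟨ha', hc', hb', hd'⟩⟩

lemma short_image_add {k : ℕ} (hk : 0 < k) {B : Finset ℕ} (t : ℕ) :
    (∃ i, B.image (· + t) = Finset.Ico i (i + k)) ↔ (∃ i, B = Finset.Ico i (i + k)) := by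
  constructor
  · rintro ⟨i, hi⟩
    have hmem : i ∈ B.image (· + t) := by
      rw [hi]; exact Finset.mem_Ico.2 ⟨le_rfl, by omega⟩
    obtain ⟨x, _, hx⟩ := Finset.mem_image.1 hmem
    have ht : t ≤ i := by omega
    refine ⟨i - t, ?_⟩
    apply Finset.image_injective (add_left_injective t)
    rw [hi, Finset.image_add_right_Ico]
    congr 1 <;> omega
  · rintro ⟨i, rfl⟩
    refine ⟨i + t, ?_⟩
    rw [Finset.image_add_right_Ico]
    congr 1
    omega

end Aux


section Glue

noncomputable def sF (t : ℕ) (F : Finset (Finset ℕ)) : Finset (Finset ℕ) :=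
  F.image (fun B => B.image (· + t))

def cc (k : ℕ) (g : Fin k → Finset (Finset ℕ)) : ℕ → ℕ :=
  fun i => if h : i < k then (g ⟨i, h⟩).card else 0

def off (k : ℕ) (g : Fin k → Finset (Finset ℕ)) (j : ℕ) : ℕ :=
  j + k * ∑ i ∈ Finset.range j, cc k g i

noncomputable def spine (k : ℕ) (g : Fin k → Finset (Finset ℕ)) : Finset ℕ :=
  Finset.univ.image (fun i : Fin k => off k g (i : ℕ))

noncomputable def glue (k : ℕ) (g : Fin k → Finset (Finset ℕ)) : Finset (Finset ℕ) :=
  insert (spine k g) (Finset.univ.biUnion (fun i : Fin k => sF (off k g (i : ℕ) + 1) (g i)))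

lemma off_zero {k : ℕ} (g : Fin k → Finset (Finset ℕ)) : off k g 0 = 0 := by simp [off]

lemma off_succ {k : ℕ} (g : Fin k → Finset (Finset ℕ)) (j : ℕ) :
    off k g (j + 1) = off k g j + 1 + k * cc k g j := by
  simp only [off, Finset.sum_range_succ]; ring

lemma cc_fin {k : ℕ} (g : Fin k → Finset (Finset ℕ)) (i : Fin k) :
    cc k g (i : ℕ) = (g i).card := by
  simp [cc, i.isLt]

lemma off_succ_fin {k : ℕ} (g : Fin k → Finset (Finset ℕ)) (i : Fin k) :
    off k g ((i : ℕ) + 1) = off k g i + 1 + k * (g i).card := by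
  rw [off_succ, cc_fin]

lemma off_mono {k : ℕ} (g : Fin k → Finset (Finset ℕ)) {j j' : ℕ} (h : j < j') :
    off k g j < off k g j' := by
  have hs : ∑ i ∈ Finset.range j, cc k g i ≤ ∑ i ∈ Finset.range j', cc k g i :=
    Finset.sum_le_sum_of_subset (Finset.range_subset_range.2 h.le)
  have := Nat.mul_le_mul_left k hs
  simp only [off]; omega

lemma off_mono' {k : ℕ} (g : Fin k → Finset (Finset ℕ)) {j j' : ℕ} (h : j ≤ j') :
    off k g j ≤ off k g j' := by
  rcases h.lt_or_eq with h | h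
  · exact (off_mono g h).le
  · rw [h]

lemma off_add_le {k : ℕ} (g : Fin k → Finset (Finset ℕ)) (j i : ℕ) :
    off k g j + i ≤ off k g (j + i) := by
  induction i with
  | zero => simp
  | succ i ih =>
    have := off_succ g (j + i)
    have h2 : off k g (j + (i+1)) = off k g (j + i) + 1 + k * cc k g (j + i) := by
      rw [← this]; ring_nf
    omega

lemma sum_cc {k : ℕ} (g : Fin k → Finset (Finset ℕ)) :
    ∑ i ∈ Finset.range k, cc k g i = ∑ i : Fin k, (g i).card := by
  rw [Finset.sum_range]
  exact Finset.sum_congr rfl (fun i _ => cc_fin g i)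

lemma off_k {k : ℕ} (g : Fin k → Finset (Finset ℕ)) {m : ℕ} (hm : ∑ i : Fin k, (g i).card = m) :
    off k g k = k * (m + 1) := by
  simp only [off, sum_cc, hm]; ring

lemma locate {f : ℕ → ℕ} {K : ℕ} (h0 : f 0 = 0) {x : ℕ}
    (hx : x < f K) : ∃ j, j < K ∧ f j ≤ x ∧ x < f (j + 1) := by
  induction K with
  | zero => rw [h0] at hx; omega
  | succ K ih =>
    by_cases hxK : x < f K
    · obtain ⟨j, h⟩ := ih hxK
      exact ⟨j, by omega, h.2⟩
    · exact ⟨K, by omega, by omega, hx⟩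

lemma sup_sF (t : ℕ) (F : Finset (Finset ℕ)) :
    (sF t F).sup id = (F.sup id).image (· + t) := by
  induction F using Finset.induction_on with
  | empty => simp [sF]
  | @insert B F hB ih =>
    rw [sF, Finset.image_insert, Finset.sup_insert, Finset.sup_insert, ← sF, ih]
    show Finset.image (fun x => x + t) B ∪ Finset.image (fun x => x + t) (F.sup id) =
      Finset.image (fun x => x + t) (B ∪ F.sup id)
    rw [Finset.image_union]

lemma image_add_range (t s : ℕ) :
    (Finset.range s).image (· + t) = Finset.Ico t (t + s) := by
  rw [Finset.range_eq_Ico, Finset.image_add_right_Ico]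
  congr 1 <;> omega

lemma image_sub_Ico (t s : ℕ) :
    (Finset.Ico t (t + s)).image (fun x => x - t) = Finset.range s := by
  ext x
  simp only [Finset.mem_image, Finset.mem_Ico, Finset.mem_range]
  constructor
  · rintro ⟨y, hy, rfl⟩; omega
  · intro hx; exact ⟨x + t, by omega, by omega⟩

lemma sF_blocks {k : ℕ} {g : Fin k → Finset (Finset ℕ)}
    (hg : ∀ i, IsDiag k (k * (g i).card) (g i)) {i : Fin k} {B : Finset ℕ}
    (hB : B ∈ sF (off k g (i : ℕ) + 1) (g i)) :
    B ⊆ Finset.Ico (off k g (i : ℕ) + 1) (off k g ((i : ℕ) + 1)) := by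
  obtain ⟨C, hC, rfl⟩ := Finset.mem_image.1 hB
  have hCsub : C ⊆ Finset.range (k * (g i).card) := blocks_subset (hg i) hC
  intro x hx
  obtain ⟨y, hy, rfl⟩ := Finset.mem_image.1 hx
  have := Finset.mem_range.1 (hCsub hy)
  rw [Finset.mem_Ico, off_succ_fin]
  omega

lemma sF_nonempty {k : ℕ} {g : Fin k → Finset (Finset ℕ)} (hk : 0 < k)
    (hg : ∀ i, IsDiag k (k * (g i).card) (g i)) {i : Fin k} {B : Finset ℕ}
    (hB : B ∈ sF (off k g (i : ℕ) + 1) (g i)) : B.Nonempty := by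
  obtain ⟨C, hC, rfl⟩ := Finset.mem_image.1 hB
  have : C.card = k := (hg i).1 C hC
  have : C.Nonempty := Finset.card_pos.1 (by omega)
  exact this.image _

lemma off_fin_injective {k : ℕ} (g : Fin k → Finset (Finset ℕ)) :
    Function.Injective (fun i : Fin k => off k g (i : ℕ)) := by
  intro i j h
  by_contra hne
  have hv : (i : ℕ) ≠ (j : ℕ) := fun hh => hne (Fin.ext hh)
  rcases hv.lt_or_gt with h' | h'
  · exact absurd h (off_mono g h').ne
  · exact absurd h.symm (off_mono g h').ne

lemma spine_card {k : ℕ} (g : Fin k → Finset (Finset ℕ)) : (spine k g).card = k := by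
  rw [spine, Finset.card_image_of_injective _ (off_fin_injective g), Finset.card_univ,
    Fintype.card_fin]

lemma mem_spine {k : ℕ} {g : Fin k → Finset (Finset ℕ)} {x : ℕ} :
    x ∈ spine k g ↔ ∃ i : Fin k, off k g (i : ℕ) = x := by
  simp [spine]

lemma zero_mem_spine {k : ℕ} (hk : 0 < k) (g : Fin k → Finset (Finset ℕ)) :
    0 ∈ spine k g := mem_spine.2 ⟨⟨0, hk⟩, off_zero g⟩

lemma spine_not_in_gap {k : ℕ} {g : Fin k → Finset (Finset ℕ)} {i : Fin k} {x : ℕ}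
    (hx : x ∈ Finset.Ico (off k g (i : ℕ) + 1) (off k g ((i : ℕ) + 1))) : x ∉ spine k g := by
  rw [mem_spine]
  rintro ⟨j, rfl⟩
  rw [Finset.mem_Ico] at hx
  rcases le_or_gt (j : ℕ) (i : ℕ) with h | h
  · have := off_mono' g h
    omega
  · have := off_mono' g (show (i : ℕ) + 1 ≤ (j : ℕ) from h)
    omega

lemma mem_glue {k : ℕ} {g : Fin k → Finset (Finset ℕ)} {B : Finset ℕ} :
    B ∈ glue k g ↔ B = spine k g ∨ ∃ i : Fin k, B ∈ sF (off k g (i : ℕ) + 1) (g i) := by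
  simp [glue]

lemma glue_cards {k : ℕ} {g : Fin k → Finset (Finset ℕ)}
    (hg : ∀ i, IsDiag k (k * (g i).card) (g i)) :
    ∀ B ∈ glue k g, B.card = k := by
  intro B hB
  rcases mem_glue.1 hB with rfl | ⟨i, hB⟩
  · exact spine_card g
  · obtain ⟨C, hC, rfl⟩ := Finset.mem_image.1 hB
    rw [Finset.card_image_of_injective _ (add_left_injective _)]
    exact (hg i).1 C hC

lemma gaps_disj {k : ℕ} {g : Fin k → Finset (Finset ℕ)} {i j : Fin k} (hij : i ≠ j) {x : ℕ}
    (h1 : x ∈ Finset.Ico (off k g (i : ℕ) + 1) (off k g ((i : ℕ) + 1)))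
    (h2 : x ∈ Finset.Ico (off k g (j : ℕ) + 1) (off k g ((j : ℕ) + 1))) : False := by
  rw [Finset.mem_Ico] at h1 h2
  have hv : (i : ℕ) ≠ (j : ℕ) := fun hh => hij (Fin.ext hh)
  rcases hv.lt_or_gt with h | h
  · have := off_mono' g (show (i : ℕ) + 1 ≤ (j : ℕ) from h)
    omega
  · have := off_mono' g (show (j : ℕ) + 1 ≤ (i : ℕ) from h)
    omega

lemma disj_spine_sF {k : ℕ} {g : Fin k → Finset (Finset ℕ)}
    (hg : ∀ i, IsDiag k (k * (g i).card) (g i)) {i : Fin k} {B : Finset ℕ}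
    (hB : B ∈ sF (off k g (i : ℕ) + 1) (g i)) : Disjoint (spine k g) B := by
  rw [Finset.disjoint_right]
  intro x hx
  exact spine_not_in_gap (sF_blocks hg hB hx)

lemma glue_disj {k : ℕ} {g : Fin k → Finset (Finset ℕ)}
    (hg : ∀ i, IsDiag k (k * (g i).card) (g i)) :
    (↑(glue k g) : Set (Finset ℕ)).PairwiseDisjoint id := by
  intro B hB B' hB' hne
  rw [Finset.mem_coe, mem_glue] at hB hB'
  simp only [Function.onFun, id]
  rcases hB with rfl | ⟨i, hB⟩ <;> rcases hB' with hB' | ⟨j, hB'⟩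
  · exact absurd hB'.symm hne
  · exact disj_spine_sF hg hB'
  · subst hB'
    exact (disj_spine_sF hg hB).symm
  · rcases eq_or_ne i j with rfl | hij
    · obtain ⟨C, hC, rfl⟩ := Finset.mem_image.1 hB
      obtain ⟨C', hC', rfl⟩ := Finset.mem_image.1 hB'
      have hCC' : C ≠ C' := fun h => hne (by rw [h])
      exact (Finset.disjoint_image (add_left_injective _)).2
        ((hg i).2.1 (Finset.mem_coe.2 hC) (Finset.mem_coe.2 hC') hCC')
    · rw [Finset.disjoint_left]
      intro x hx hx'
      exact gaps_disj hij (sF_blocks hg hB hx) (sF_blocks hg hB' hx')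

lemma noncross_spine_sF {k : ℕ} {g : Fin k → Finset (Finset ℕ)}
    (hg : ∀ i, IsDiag k (k * (g i).card) (g i)) {i : Fin k} {B' : Finset ℕ}
    (hB' : B' ∈ sF (off k g (i : ℕ) + 1) (g i)) : ¬ Cross (spine k g) B' := by
  apply not_cross_sep (u := off k g (i : ℕ)) (v := off k g ((i : ℕ) + 1))
  · intro y hy
    have := Finset.mem_Ico.1 (sF_blocks hg hB' hy)
    omega
  · intro x hx
    obtain ⟨j, rfl⟩ := mem_spine.1 hx
    rcases le_or_gt (j : ℕ) (i : ℕ) with h | h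
    · exact Or.inl (off_mono' g h)
    · exact Or.inr (off_mono' g (show (i : ℕ) + 1 ≤ (j : ℕ) from h))

lemma glue_noncross {k : ℕ} {g : Fin k → Finset (Finset ℕ)}
    (hg : ∀ i, IsDiag k (k * (g i).card) (g i)) :
    ∀ B ∈ glue k g, ∀ B' ∈ glue k g, B ≠ B' → ¬ Cross B B' := by
  intro B hB B' hB' hne
  rcases mem_glue.1 hB with rfl | ⟨i, hB⟩ <;> rcases mem_glue.1 hB' with hB' | ⟨j, hB'⟩
  · exact absurd hB'.symm hne
  · exact noncross_spine_sF hg hB'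
  · subst hB'
    rw [cross_comm]
    exact noncross_spine_sF hg hB
  · rcases eq_or_ne i j with rfl | hij
    · obtain ⟨C, hC, rfl⟩ := Finset.mem_image.1 hB
      obtain ⟨C', hC', rfl⟩ := Finset.mem_image.1 hB'
      have hCC' : C ≠ C' := fun h => hne (by rw [h])
      rw [cross_image_add]
      exact (hg i).2.2.1 C hC C' hC' hCC'
    · apply not_cross_sep (u := off k g (j : ℕ)) (v := off k g ((j : ℕ) + 1))
      · intro y hy
        have := Finset.mem_Ico.1 (sF_blocks hg hB' hy)
        omega
      · intro x hx
        have hxx := Finset.mem_Ico.1 (sF_blocks hg hB hx)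
        have hv : (i : ℕ) ≠ (j : ℕ) := fun hh => hij (Fin.ext hh)
        rcases hv.lt_or_gt with h | h
        · exact Or.inl (le_trans (by omega) (off_mono' g (show (i : ℕ) + 1 ≤ (j : ℕ) from h)))
        · exact Or.inr (le_trans (off_mono' g (show (j : ℕ) + 1 ≤ (i : ℕ) from h)) (by omega))

lemma sup_sF_gap {k : ℕ} {g : Fin k → Finset (Finset ℕ)}
    (hg : ∀ i, IsDiag k (k * (g i).card) (g i)) (i : Fin k) :
    (sF (off k g (i : ℕ) + 1) (g i)).sup id =
      Finset.Ico (off k g (i : ℕ) + 1) (off k g ((i : ℕ) + 1)) := by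
  rw [sup_sF, (hg i).2.2.2, image_add_range, off_succ_fin]

lemma glue_sup {k : ℕ} (hk : 0 < k) {g : Fin k → Finset (Finset ℕ)}
    (hg : ∀ i, IsDiag k (k * (g i).card) (g i)) {m : ℕ} (hm : ∑ i : Fin k, (g i).card = m) :
    (glue k g).sup id = Finset.range (k * (m + 1)) := by
  rw [← off_k g hm, glue, Finset.sup_insert, Finset.sup_biUnion]
  have hsu : ∀ (a b : Finset ℕ), a ⊔ b = a ∪ b := fun _ _ => rfl
  rw [hsu]
  ext x
  simp only [Finset.mem_union, id]
  constructor
  · intro hx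
    rcases hx with hx | hx
    · obtain ⟨j, rfl⟩ := mem_spine.1 hx
      exact Finset.mem_range.2 (off_mono g j.isLt)
    · rw [Finset.mem_sup] at hx
      obtain ⟨i, -, hx⟩ := hx
      rw [sup_sF_gap hg] at hx
      have := Finset.mem_Ico.1 hx
      exact Finset.mem_range.2 (lt_of_lt_of_le this.2 (off_mono' g i.isLt))
  · intro hx
    have hx' := Finset.mem_range.1 hx
    obtain ⟨j, hj, hle, hlt⟩ := locate (off_zero g) hx'
    rcases hle.lt_or_eq with h | h
    · right
      rw [Finset.mem_sup]
      refine ⟨⟨j, hj⟩, Finset.mem_univ _, ?_⟩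
      rw [sup_sF_gap hg]
      show x ∈ Finset.Ico (off k g j + 1) (off k g (j + 1))
      exact Finset.mem_Ico.2 ⟨by omega, hlt⟩
    · left
      exact mem_spine.2 ⟨⟨j, hj⟩, h⟩

lemma glue_isDiag {k : ℕ} (hk : 0 < k) {g : Fin k → Finset (Finset ℕ)}
    (hg : ∀ i, IsDiag k (k * (g i).card) (g i)) {m : ℕ} (hm : ∑ i : Fin k, (g i).card = m) :
    IsDiag k (k * (m + 1)) (glue k g) :=
  ⟨glue_cards hg, glue_disj hg, glue_noncross hg, glue_sup hk hg hm⟩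

end Glue


section GlueSc

lemma glue_sc {k : ℕ} (hk : 0 < k) {g : Fin k → Finset (Finset ℕ)}
    (hg : ∀ i, IsDiag k (k * (g i).card) (g i)) :
    sc k (glue k g) = (∑ i : Fin k, sc k (g i)) +
      (if (∀ i : Fin k, (i : ℕ) < k - 1 → g i = ∅) then 1 else 0) := by
  have hsp : spine k g ∉ Finset.univ.biUnion (fun i : Fin k => sF (off k g (i:ℕ) + 1) (g i)) := by
    rw [Finset.mem_biUnion]
    rintro ⟨i, -, hB⟩
    have h0 : (0:ℕ) ∈ spine k g := zero_mem_spine hk g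
    have := (sF_blocks hg hB) h0
    rw [Finset.mem_Ico] at this
    omega
  have hcard : (Finset.filter (fun B => ∃ i, B = Finset.Ico i (i + k))
      (Finset.univ.biUnion fun i : Fin k => sF (off k g (i:ℕ) + 1) (g i))).card
      = ∑ i : Fin k, sc k (g i) := by
    rw [Finset.filter_biUnion, Finset.card_biUnion]
    · apply Finset.sum_congr rfl
      intro i _
      have himg : Finset.filter (fun B => ∃ i2, B = Finset.Ico i2 (i2 + k))
          (sF (off k g (i:ℕ) + 1) (g i))
          = ((g i).filter (fun C => ∃ i2, C = Finset.Ico i2 (i2 + k))).image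
              (fun B => B.image (· + (off k g (i:ℕ) + 1))) := by
        rw [sF, Finset.filter_image]
        congr 1
        apply Finset.filter_congr
        intro C _
        constructor
        · intro hC; exact (short_image_add hk _).1 hC
        · intro hC; exact (short_image_add hk _).2 hC
      rw [himg, Finset.card_image_of_injective _
        (Finset.image_injective (add_left_injective _))]
      rfl
    · intro i _ j _ hij
      apply Finset.disjoint_filter_filter
      rw [Finset.disjoint_left]
      intro B hBi hBj
      obtain ⟨x, hx⟩ := sF_nonempty hk hg hBi
      exact gaps_disj hij (sF_blocks hg hBi hx) (sF_blocks hg hBj hx)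
  have hshort : (∃ i, spine k g = Finset.Ico i (i + k)) ↔
      (∀ i : Fin k, (i : ℕ) < k - 1 → g i = ∅) := by
    constructor
    · rintro ⟨a, ha⟩
      have h0 : (0:ℕ) ∈ spine k g := zero_mem_spine hk g
      rw [ha, Finset.mem_Ico] at h0
      have ha0 : a = 0 := by omega
      subst ha0
      have hoffj : ∀ j, j < k → off k g j = j := by
        intro j hj
        have hmem : off k g j ∈ spine k g := mem_spine.2 ⟨⟨j, hj⟩, rfl⟩
        rw [ha, Finset.mem_Ico] at hmem
        have hge : j ≤ off k g j := by
          have := off_add_le g 0 j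
          rw [off_zero] at this
          simpa using this
        have hk1 : off k g j + (k - 1 - j) ≤ off k g (k - 1) := by
          have h2 := off_add_le g j (k - 1 - j)
          have heq : j + (k - 1 - j) = k - 1 := by omega
          rw [heq] at h2
          omega
        have hlast : off k g (k - 1) ∈ spine k g := mem_spine.2 ⟨⟨k - 1, by omega⟩, rfl⟩
        rw [ha, Finset.mem_Ico] at hlast
        omega
      intro i hi
      have h1 := hoffj (i : ℕ) i.isLt
      have h2 := hoffj ((i : ℕ) + 1) (by omega)
      rw [off_succ_fin] at h2
      have h3 : k * (g i).card = 0 := by omega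
      have h4 : (g i).card = 0 := (Nat.mul_eq_zero.1 h3).resolve_left (by omega)
      exact Finset.card_eq_zero.1 h4
    · intro hall
      refine ⟨0, ?_⟩
      have hcc : ∀ i, i < k - 1 → cc k g i = 0 := by
        intro i hi
        have hik : i < k := by omega
        have he : g ⟨i, hik⟩ = ∅ := hall ⟨i, hik⟩ hi
        simp [cc, hik, he]
      have hoffj : ∀ j, j ≤ k - 1 → off k g j = j := by
        intro j hj
        rw [off]
        have hz : ∑ i ∈ Finset.range j, cc k g i = 0 :=
          Finset.sum_eq_zero (fun i hi => hcc i (by have := Finset.mem_range.1 hi; omega))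
        rw [hz]
        ring
      ext x
      rw [mem_spine, Finset.mem_Ico]
      constructor
      · rintro ⟨i, rfl⟩
        have := hoffj (i : ℕ) (by have := i.isLt; omega)
        have := i.isLt
        omega
      · intro hx
        have hxk : x < k := by omega
        refine ⟨⟨x, hxk⟩, ?_⟩
        have := hoffj x (by omega)
        simpa using this
  rw [glue, sc, Finset.filter_insert]
  by_cases hP : ∃ i0, spine k g = Finset.Ico i0 (i0 + k)
  · rw [if_pos hP, if_pos (hshort.1 hP),
      Finset.card_insert_of_notMem (fun hcon => hsp (Finset.mem_of_mem_filter _ hcon)), hcard]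
  · rw [if_neg hP, if_neg (fun hcon => hP (hshort.2 hcon)), hcard]
    ring

lemma sF_injective (t : ℕ) : Function.Injective (sF t) :=
  Finset.image_injective (Finset.image_injective (add_left_injective t))

lemma sF_eq_filter {k : ℕ} (hk : 0 < k) {g : Fin k → Finset (Finset ℕ)}
    (hg : ∀ i, IsDiag k (k * (g i).card) (g i)) (i : Fin k) :
    sF (off k g (i:ℕ) + 1) (g i) =
      (glue k g).filter (fun B => B ⊆ Finset.Ico (off k g (i:ℕ) + 1) (off k g ((i:ℕ) + 1))) := by
  ext B
  rw [Finset.mem_filter]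
  constructor
  · intro hB
    exact ⟨mem_glue.2 (Or.inr ⟨i, hB⟩), sF_blocks hg hB⟩
  · rintro ⟨hBg, hBsub⟩
    rcases mem_glue.1 hBg with rfl | ⟨j, hBj⟩
    · exfalso
      have h0 := zero_mem_spine hk g
      have := Finset.mem_Ico.1 (hBsub h0)
      omega
    · rcases eq_or_ne i j with rfl | hij
      · exact hBj
      · exfalso
        obtain ⟨x, hx⟩ := sF_nonempty hk hg hBj
        exact gaps_disj hij (hBsub hx) (sF_blocks hg hBj hx)

lemma glue_inj {k : ℕ} (hk : 0 < k) {g g' : Fin k → Finset (Finset ℕ)}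
    (hg : ∀ i, IsDiag k (k * (g i).card) (g i)) (hg' : ∀ i, IsDiag k (k * (g' i).card) (g' i))
    (hsum : ∑ i : Fin k, (g i).card = ∑ i : Fin k, (g' i).card)
    (h : glue k g = glue k g') : g = g' := by
  have hsp : spine k g = spine k g' := by
    have h1 : spine k g' ∈ glue k g := by
      rw [h]; exact mem_glue.2 (Or.inl rfl)
    rcases mem_glue.1 h1 with h2 | ⟨i, h2⟩
    · exact h2.symm
    · exfalso
      have := (sF_blocks hg h2) (zero_mem_spine hk g')
      rw [Finset.mem_Ico] at this
      omega
  have hoff : ∀ j : ℕ, j < k → off k g j = off k g' j := by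
    have e1 : (fun i : Fin k => off k g (i:ℕ)) = (spine k g).orderEmbOfFin (spine_card g) :=
      Finset.orderEmbOfFin_unique _ (fun x => mem_spine.2 ⟨x, rfl⟩)
        (fun a b hab => off_mono g hab)
    have e2 : (fun i : Fin k => off k g' (i:ℕ)) = (spine k g).orderEmbOfFin (spine_card g) :=
      Finset.orderEmbOfFin_unique _
        (fun x => by rw [hsp]; exact mem_spine.2 ⟨x, rfl⟩)
        (fun a b hab => off_mono g' hab)
    intro j hj
    have := congrFun (e1.trans e2.symm) ⟨j, hj⟩
    simpa using this
  have hoff' : ∀ j : ℕ, j ≤ k → off k g j = off k g' j := by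
    intro j hj
    rcases hj.lt_or_eq with hj | rfl
    · exact hoff j hj
    · simp only [off]
      rw [sum_cc, sum_cc, hsum]
  funext i
  apply sF_injective (off k g (i:ℕ) + 1)
  have hi2 : off k g ((i:ℕ) + 1) = off k g' ((i:ℕ) + 1) := hoff' _ (by have := i.isLt; omega)
  have hi1 : off k g (i:ℕ) = off k g' (i:ℕ) := hoff _ i.isLt
  rw [sF_eq_filter hk hg i, h, hi1, hi2, ← sF_eq_filter hk hg' i]

end GlueSc


section Surj

lemma unshift_shift {B : Finset ℕ} {t : ℕ} (h : ∀ x ∈ B, t ≤ x) :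
    (B.image (fun x => x - t)).image (· + t) = B := by
  rw [Finset.image_image]
  have hc : ∀ x ∈ B, ((· + t) ∘ (fun x => x - t)) x = id x := by
    intro x hx
    simp only [Function.comp, id]
    have := h x hx
    omega
  rw [Finset.image_congr hc, Finset.image_id]

lemma sup_imageF (f : ℕ → ℕ) (F : Finset (Finset ℕ)) :
    (F.image (fun B => B.image f)).sup id = (F.sup id).image f := by
  induction F using Finset.induction_on with
  | empty => simp
  | @insert B F hB ih =>
    rw [Finset.image_insert, Finset.sup_insert, Finset.sup_insert, ih]
    show Finset.image f B ∪ Finset.image f (F.sup id) = Finset.image f (B ∪ F.sup id)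
    rw [Finset.image_union]

lemma glue_surj {k : ℕ} (hk : 0 < k) {m : ℕ} {D : Finset (Finset ℕ)}
    (hD : IsDiag k (k * (m + 1)) D) :
    ∃ g : Fin k → Finset (Finset ℕ), (∀ i, IsDiag k (k * (g i).card) (g i)) ∧
      (∑ i : Fin k, (g i).card = m) ∧ glue k g = D := by
  set n := k * (m + 1) with hn
  have hn0 : 0 < n := Nat.mul_pos hk (by omega)
  have h0 : (0:ℕ) ∈ D.sup id := by rw [hD.2.2.2]; exact Finset.mem_range.2 hn0
  rw [Finset.mem_sup] at h0
  obtain ⟨B0, hB0D, hB00⟩ := h0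
  have hB00 : (0:ℕ) ∈ B0 := hB00
  have hB0c : B0.card = k := hD.1 B0 hB0D
  set β' : ℕ → ℕ := fun j => if h : j < k then (B0.orderEmbOfFin hB0c ⟨j, h⟩ : ℕ) else n with hβ'
  have βmem : ∀ j, j < k → β' j ∈ B0 := by
    intro j hj
    simp only [hβ', dif_pos hj]
    exact Finset.orderEmbOfFin_mem _ _ _
  have hB0sub : B0 ⊆ Finset.range n := blocks_subset hD hB0D
  have β'k : β' k = n := by simp [hβ']
  have β'mono : ∀ j j', j < j' → j' ≤ k → β' j < β' j' := by
    intro j j' hjj hj'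
    have hjk : j < k := by omega
    rcases hj'.lt_or_eq with h | heq
    · simp only [hβ', dif_pos hjk, dif_pos h]
      exact (B0.orderEmbOfFin hB0c).strictMono (show (⟨j, hjk⟩ : Fin k) < ⟨j', h⟩ from hjj)
    · rw [heq, β'k]
      exact Finset.mem_range.1 (hB0sub (βmem j hjk))
  have β'mono' : ∀ j j', j ≤ j' → j' ≤ k → β' j ≤ β' j' := by
    intro j j' hjj hj'
    rcases hjj.lt_or_eq with h | rfl
    · exact (β'mono j j' h hj').le
    · exact le_rfl
  have β'0 : β' 0 = 0 := by
    have hle : β' 0 ≤ 0 := by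
      simp only [hβ', dif_pos hk]
      rw [Finset.orderEmbOfFin_zero hB0c hk]
      exact Finset.min'_le _ _ hB00
    omega
  have β'surj : ∀ x ∈ B0, ∃ j, j < k ∧ β' j = x := by
    intro x hx
    obtain ⟨i, hi⟩ := (B0.orderIsoOfFin hB0c).surjective ⟨x, hx⟩
    refine ⟨(i : ℕ), i.isLt, ?_⟩
    simp only [hβ', dif_pos i.isLt]
    have he : (⟨(i : ℕ), i.isLt⟩ : Fin k) = i := by simp
    rw [he, ← Finset.coe_orderIsoOfFin_apply, hi]
  have hBnotB0 : ∀ B ∈ D, B ≠ B0 → ∀ x ∈ B, x ∉ B0 := by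
    intro B hB hne x hxB hxB0
    have hdis := hD.2.1 (Finset.mem_coe.2 hB) (Finset.mem_coe.2 hB0D) hne
    exact Finset.disjoint_left.1 hdis hxB hxB0
  have hgap : ∀ B ∈ D, B ≠ B0 → ∃ j, j < k ∧ B ⊆ Finset.Ico (β' j + 1) (β' (j + 1)) := by
    intro B hB hne
    have hBne : B.Nonempty := Finset.card_pos.1 (by rw [hD.1 B hB]; omega)
    have hxB : B.min' hBne ∈ B := B.min'_mem hBne
    set x := B.min' hBne with hxdef
    have hxn : x < n := Finset.mem_range.1 (blocks_subset hD hB hxB)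
    have hxB0 : x ∉ B0 := hBnotB0 B hB hne x hxB
    have hx0 : 0 < x := Nat.pos_of_ne_zero (fun hh => hxB0 (hh ▸ hB00))
    obtain ⟨j, hjk, hle, hlt⟩ := locate β'0 (show x < β' k by rw [β'k]; exact hxn)
    have hβlt : β' j < x := by
      rcases hle.lt_or_eq with h | h
      · exact h
      · exact absurd (h ▸ βmem j hjk) hxB0
    refine ⟨j, hjk, ?_⟩
    intro y hyB
    rw [Finset.mem_Ico]
    have hxy : x ≤ y := Finset.min'_le _ _ hyB
    refine ⟨by omega, ?_⟩
    by_contra hge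
    push_neg at hge
    have hjk1 : j + 1 < k := by
      by_contra hh
      have heq : j + 1 = k := by omega
      rw [heq, β'k] at hge
      have := Finset.mem_range.1 (blocks_subset hD hB hyB)
      omega
    have hc : β' (j + 1) ∈ B0 := βmem _ hjk1
    have hcy : β' (j + 1) ≠ y := fun hh => hBnotB0 B hB hne y hyB (hh ▸ hc)
    have hcross : Cross B0 B := ⟨0, x, β' (j + 1), y, by omega, by omega, by omega,
      Or.inl ⟨hB00, hc, hxB, hyB⟩⟩
    exact hD.2.2.1 B0 hB0D B hB (Ne.symm hne) hcross
  set E : ℕ → Finset (Finset ℕ) :=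
    fun j => D.filter (fun B => B ≠ B0 ∧ B ⊆ Finset.Ico (β' j + 1) (β' (j + 1))) with hE
  have hEcover : ∀ j, j < k → (E j).sup id = Finset.Ico (β' j + 1) (β' (j + 1)) := by
    intro j hj
    apply le_antisymm
    · exact Finset.sup_le (fun B hB => (Finset.mem_filter.1 hB).2.2)
    · intro x hx
      have hxI := Finset.mem_Ico.1 hx
      have hβn : β' (j + 1) ≤ n := by
        rcases Nat.lt_or_ge (j + 1) k with h | h
        · exact (Finset.mem_range.1 (hB0sub (βmem _ h))).le
        · have heq : j + 1 = k := by omega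
          rw [heq, β'k]
      have hxD : x ∈ D.sup id := by
        rw [hD.2.2.2]
        exact Finset.mem_range.2 (by omega)
      rw [Finset.mem_sup] at hxD
      obtain ⟨B, hBD, hxB⟩ := hxD
      have hxB : x ∈ B := hxB
      have hBne : B ≠ B0 := by
        rintro rfl
        obtain ⟨j'', hj'', hval⟩ := β'surj x hxB
        have l1 : j < j'' := by
          by_contra hh
          have := β'mono' j'' j (by omega) (by omega)
          omega
        have l2 : j'' < j + 1 := by
          by_contra hh
          have := β'mono' (j + 1) j'' (by omega) (by omega)
          omega
        omega
      obtain ⟨j', hj', hsubB⟩ := hgap B hBD hBne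
      have hjj : j' = j := by
        have e2 := Finset.mem_Ico.1 (hsubB hxB)
        by_contra hne2
        rcases Nat.lt_or_ge j' j with h | h
        · have := β'mono' (j' + 1) j (by omega) (by omega)
          omega
        · have := β'mono' (j + 1) j' (by omega) (by omega)
          omega
      subst hjj
      have hBE : B ∈ E j' := Finset.mem_filter.2 ⟨hBD, hBne, hsubB⟩
      exact (Finset.le_sup (f := id) hBE) hxB
  have hβsucc : ∀ j, j < k → β' (j + 1) = β' j + 1 + k * (E j).card := by
    intro j hj
    have hsup := hEcover j hj
    have hdisj : ∀ B ∈ E j, ∀ B' ∈ E j, B ≠ B' → Disjoint (id B) (id B') := by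
      intro B hB B' hB' hne
      exact hD.2.1 (Finset.mem_coe.2 (Finset.mem_of_mem_filter _ hB))
        (Finset.mem_coe.2 (Finset.mem_of_mem_filter _ hB')) hne
    have hcard : (Finset.Ico (β' j + 1) (β' (j + 1))).card = ∑ B ∈ E j, (id B).card := by
      rw [← hsup, Finset.sup_eq_biUnion, Finset.card_biUnion hdisj]
    have hsum : ∑ B ∈ E j, (id B).card = (E j).card * k := by
      have hcg : ∀ B ∈ E j, (id B).card = k := fun B hB => hD.1 B (Finset.mem_of_mem_filter _ hB)
      exact (Finset.sum_congr rfl hcg).trans (by rw [Finset.sum_const, smul_eq_mul])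
    have hlt : β' j + 1 ≤ β' (j + 1) := β'mono j (j + 1) (by omega) (by omega)
    rw [Nat.card_Ico, hsum] at hcard
    have hcomm : k * (E j).card = (E j).card * k := Nat.mul_comm _ _
    omega
  have hEblock_lb : ∀ j, ∀ B ∈ E j, ∀ x ∈ B, β' j + 1 ≤ x := by
    intro j B hB x hx
    exact (Finset.mem_Ico.1 ((Finset.mem_filter.1 hB).2.2 hx)).1
  have hunsh : ∀ j, ∀ B ∈ E j,
      (B.image (fun x => x - (β' j + 1))).image (· + (β' j + 1)) = B :=
    fun j B hB => unshift_shift (hEblock_lb j B hB)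
  set g : Fin k → Finset (Finset ℕ) :=
    fun i => (E (i : ℕ)).image (fun B => B.image (fun x => x - (β' (i : ℕ) + 1))) with hgdef
  have hgcard : ∀ i : Fin k, (g i).card = (E (i : ℕ)).card := by
    intro i
    apply Finset.card_image_of_injOn
    intro B hB B' hB' hBB'
    have := congrArg (Finset.image (· + (β' (i : ℕ) + 1))) hBB'
    rwa [hunsh _ B (Finset.mem_coe.1 hB), hunsh _ B' (Finset.mem_coe.1 hB')] at this
  have hgdiag : ∀ i, IsDiag k (k * (g i).card) (g i) := by
    intro i
    obtain ⟨j, hjlt⟩ := i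
    show IsDiag k _ ((E j).image (fun B => B.image (fun x => x - (β' j + 1))))
    refine ⟨?_, ?_, ?_, ?_⟩
    · intro C hC
      obtain ⟨B, hB, rfl⟩ := Finset.mem_image.1 hC
      have hinj : Set.InjOn (fun x => x - (β' j + 1)) ↑B := by
        intro x hx y hy hxy
        have h1 := hEblock_lb j B hB x (Finset.mem_coe.1 hx)
        have h2 := hEblock_lb j B hB y (Finset.mem_coe.1 hy)
        simp only at hxy
        omega
      rw [Finset.card_image_of_injOn hinj]
      exact hD.1 B (Finset.mem_of_mem_filter _ hB)
    · intro C hC C' hC' hne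
      obtain ⟨B, hB, rfl⟩ := Finset.mem_image.1 (Finset.mem_coe.1 hC)
      obtain ⟨B', hB', rfl⟩ := Finset.mem_image.1 (Finset.mem_coe.1 hC')
      have hBB' : B ≠ B' := fun hh => hne (by rw [hh])
      have hdis := hD.2.1 (Finset.mem_coe.2 (Finset.mem_of_mem_filter _ hB))
        (Finset.mem_coe.2 (Finset.mem_of_mem_filter _ hB')) hBB'
      simp only [Function.onFun, id]
      rw [Finset.disjoint_left]
      intro z hz hz'
      obtain ⟨x, hx, rfl⟩ := Finset.mem_image.1 hz
      obtain ⟨y, hy, hyx⟩ := Finset.mem_image.1 hz'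
      have l1 := hEblock_lb j B hB x hx
      have l2 := hEblock_lb j B' hB' y hy
      have : y = x := by omega
      exact Finset.disjoint_left.1 hdis hx (this ▸ hy)
    · intro C hC C' hC' hne
      obtain ⟨B, hB, rfl⟩ := Finset.mem_image.1 hC
      obtain ⟨B', hB', rfl⟩ := Finset.mem_image.1 hC'
      have hBB' : B ≠ B' := fun hh => hne (by rw [hh])
      intro hcr
      exact hD.2.2.1 B (Finset.mem_of_mem_filter _ hB) B' (Finset.mem_of_mem_filter _ hB')
        hBB' (cross_of_cross_image_sub (hEblock_lb j B hB) (hEblock_lb j B' hB') hcr)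
    · show ((E j).image (fun B => B.image (fun x => x - (β' j + 1)))).sup id =
        Finset.range (k * (g ⟨j, hjlt⟩).card)
      rw [sup_imageF, hEcover j hjlt, hgcard ⟨j, hjlt⟩]
      have heq : Finset.Ico (β' j + 1) (β' (j + 1)) =
          Finset.Ico (β' j + 1) ((β' j + 1) + k * (E j).card) := by
        rw [hβsucc j hjlt]
      rw [heq, image_sub_Ico]
  have hβj : ∀ j, j ≤ k → β' j = j + k * ∑ i ∈ Finset.range j, (E i).card := by
    intro j hj
    induction j with
    | zero => simp [β'0]
    | succ j ih =>
      rw [hβsucc j (by omega), ih (by omega), Finset.sum_range_succ]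
      ring
  have hgsum : ∑ i : Fin k, (g i).card = m := by
    have h1 := hβj k le_rfl
    rw [β'k] at h1
    have h2 : n = k * m + k := by rw [hn]; ring
    have h3 : ∑ i : Fin k, (g i).card = ∑ i ∈ Finset.range k, (E i).card := by
      rw [Finset.sum_range (fun i => (E i).card)]
      exact Finset.sum_congr rfl (fun i _ => hgcard i)
    have h4 : k * (∑ i ∈ Finset.range k, (E i).card) = k * m := by omega
    rw [h3]
    exact Nat.eq_of_mul_eq_mul_left hk h4
  have hoffβ : ∀ j, j ≤ k → off k g j = β' j := by
    intro j hj
    induction j with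
    | zero => rw [off_zero, β'0]
    | succ j ih =>
      have hjk : j < k := by omega
      have hcc : cc k g j = (E j).card := by
        have : cc k g j = (g ⟨j, hjk⟩).card := by simp [cc, hjk]
        rw [this, hgcard]
      rw [off_succ, hcc, ih (by omega), hβsucc j hjk]
  have hspine : spine k g = B0 := by
    ext x
    rw [mem_spine]
    constructor
    · rintro ⟨i, rfl⟩
      rw [hoffβ (i : ℕ) i.isLt.le]
      exact βmem _ i.isLt
    · intro hx
      obtain ⟨j, hj, hval⟩ := β'surj x hx
      refine ⟨⟨j, hj⟩, ?_⟩
      show off k g j = x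
      rw [hoffβ j hj.le]
      exact hval
  have hsF : ∀ i : Fin k, sF (off k g (i : ℕ) + 1) (g i) = E (i : ℕ) := by
    intro i
    rw [hoffβ (i : ℕ) i.isLt.le, sF]
    show ((E (i : ℕ)).image (fun B => B.image (fun x => x - (β' (i : ℕ) + 1)))).image
      (fun B => B.image (· + (β' (i : ℕ) + 1))) = E (i : ℕ)
    rw [Finset.image_image]
    have hc : ∀ B ∈ (E (i : ℕ) : Finset (Finset ℕ)),
        ((fun B => B.image (· + (β' (i : ℕ) + 1))) ∘
          (fun B => B.image (fun x => x - (β' (i : ℕ) + 1)))) B = id B := by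
      intro B hB
      simp only [Function.comp, id]
      exact hunsh _ B hB
    rw [Finset.image_congr hc, Finset.image_id]
  have hglue : glue k g = D := by
    apply Finset.Subset.antisymm
    · intro B hB
      rcases mem_glue.1 hB with rfl | ⟨i, hBi⟩
      · rw [hspine]
        exact hB0D
      · rw [hsF i] at hBi
        exact Finset.mem_of_mem_filter _ hBi
    · intro B hB
      rcases eq_or_ne B B0 with rfl | hne
      · exact mem_glue.2 (Or.inl hspine.symm)
      · obtain ⟨j, hj, hsub⟩ := hgap B hB hne
        refine mem_glue.2 (Or.inr ⟨⟨j, hj⟩, ?_⟩)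
        rw [hsF ⟨j, hj⟩]
        exact Finset.mem_filter.2 ⟨hB, hne, hsub⟩
  exact ⟨g, hgdiag, hgsum, hglue⟩

end Surj


section Count

noncomputable def Tup (k m : ℕ) : Finset (Fin k → Finset (Finset ℕ)) :=
  (Fintype.piFinset (fun _ : Fin k => ((Finset.range (k * m)).powerset).powerset)).filter
    (fun g => (∀ i, IsDiag k (k * (g i).card) (g i)) ∧ (∑ i : Fin k, (g i).card) = m)

lemma mem_Tup {k m : ℕ} {g : Fin k → Finset (Finset ℕ)} :
    g ∈ Tup k m ↔ (∀ i, IsDiag k (k * (g i).card) (g i)) ∧ (∑ i : Fin k, (g i).card) = m := by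
  rw [Tup, Finset.mem_filter, and_iff_right_iff_imp]
  intro h
  rw [Fintype.mem_piFinset]
  intro i
  rw [Finset.mem_powerset]
  intro B hB
  rw [Finset.mem_powerset]
  have h1 : B ⊆ Finset.range (k * (g i).card) := blocks_subset (h.1 i) hB
  have h2 : (g i).card ≤ m := by
    rw [← h.2]
    exact Finset.single_le_sum (f := fun i => (g i).card) (fun _ _ => Nat.zero_le _)
      (Finset.mem_univ i)
  exact h1.trans (Finset.range_subset_range.2 (Nat.mul_le_mul_left k h2))

lemma tcount_succ {k : ℕ} (hk : 0 < k) (m ℓ : ℕ) :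
    Tcount k (m + 1) ℓ =
      ((Tup k m).filter (fun g => (∑ i : Fin k, sc k (g i)) +
        (if (∀ i : Fin k, (i : ℕ) < k - 1 → g i = ∅) then 1 else 0) = ℓ)).card := by
  rw [tcount_eq hk]
  symm
  apply Finset.card_nbij (i := glue k)
  · intro g hg
    obtain ⟨hTup, hsc⟩ := Finset.mem_filter.1 hg
    obtain ⟨hdiag, hsum⟩ := mem_Tup.1 hTup
    exact mem_DS.2 ⟨glue_isDiag hk hdiag hsum, by rw [glue_sc hk hdiag]; exact hsc⟩
  · intro g hg g' hg' h
    simp only [Finset.mem_coe] at hg hg'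
    obtain ⟨hTup, -⟩ := Finset.mem_filter.1 hg
    obtain ⟨hTup', -⟩ := Finset.mem_filter.1 hg'
    obtain ⟨hdiag, hsum⟩ := mem_Tup.1 hTup
    obtain ⟨hdiag', hsum'⟩ := mem_Tup.1 hTup'
    exact glue_inj hk hdiag hdiag' (hsum.trans hsum'.symm) h
  · intro D hD
    rw [Finset.mem_coe] at hD
    obtain ⟨hdiag, hsc⟩ := mem_DS.1 hD
    obtain ⟨g, hgdiag, hgsum, hglue⟩ := glue_surj hk hdiag
    refine ⟨g, ?_, hglue⟩
    rw [Finset.mem_coe, Finset.mem_filter]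
    refine ⟨mem_Tup.2 ⟨hgdiag, hgsum⟩, ?_⟩
    rw [← glue_sc hk hgdiag, hglue]
    exact hsc

lemma dlt_filter_card {k : ℕ} (hk : 0 < k) (m s : ℕ) :
    ((Tup k m).filter (fun g => (∀ i : Fin k, (i : ℕ) < k - 1 → g i = ∅) ∧ (∑ i : Fin k, sc k (g i)) = s)).card
      = Tcount k m s := by
  rw [tcount_eq hk]
  have hlst : k - 1 < k := by omega
  apply Finset.card_nbij (i := fun g => g ⟨k - 1, hlst⟩)
  · intro g hg
    obtain ⟨hTup, hdlt, hsum⟩ := Finset.mem_filter.1 hg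
    obtain ⟨hdiag, hm⟩ := mem_Tup.1 hTup
    have hzero : ∀ i : Fin k, i ≠ ⟨k - 1, hlst⟩ → g i = ∅ := by
      intro i hi
      apply hdlt i
      have h1 : (i : ℕ) ≠ k - 1 := fun hh => hi (Fin.ext hh)
      have := i.isLt
      omega
    have hcard : (g ⟨k - 1, hlst⟩).card = m := by
      rw [← hm]
      exact (Finset.sum_eq_single (f := fun i => (g i).card) (⟨k - 1, hlst⟩ : Fin k)
        (fun b _ hb => by show (g b).card = 0; rw [hzero b hb]; simp)
        (fun h => absurd (Finset.mem_univ _) h)).symm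
    have hsum2 : (∑ i : Fin k, sc k (g i)) = sc k (g ⟨k - 1, hlst⟩) :=
      Finset.sum_eq_single (f := fun i => sc k (g i)) (⟨k - 1, hlst⟩ : Fin k)
        (fun b _ hb => by show sc k (g b) = 0; rw [hzero b hb]; exact sc_empty k)
        (fun h => absurd (Finset.mem_univ _) h)
    refine mem_DS.2 ⟨?_, ?_⟩
    · have := hdiag ⟨k - 1, hlst⟩
      rwa [hcard] at this
    · rw [← hsum, hsum2]
  · intro g hg g' hg' h
    simp only [Finset.mem_coe] at hg hg'
    obtain ⟨hTup, hdlt, -⟩ := Finset.mem_filter.1 hg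
    obtain ⟨hTup', hdlt', -⟩ := Finset.mem_filter.1 hg'
    funext i
    rcases eq_or_ne i ⟨k - 1, hlst⟩ with rfl | hi
    · exact h
    · have h1 : (i : ℕ) < k - 1 := by
        have h2 : (i : ℕ) ≠ k - 1 := fun hh => hi (Fin.ext hh)
        have := i.isLt
        omega
      rw [hdlt i h1, hdlt' i h1]
  · intro D hD
    obtain ⟨hdiag, hsc⟩ := mem_DS.1 (Finset.mem_coe.1 hD)
    have hDcard : D.card = m := hdiag.card_eq hk
    refine ⟨fun i => if i = ⟨k - 1, hlst⟩ then D else ∅, ?_, by simp⟩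
    rw [Finset.mem_coe, Finset.mem_filter]
    have hcards : ∀ i : Fin k, (if i = ⟨k - 1, hlst⟩ then D else ∅).card
        = if i = ⟨k - 1, hlst⟩ then m else 0 := by
      intro i
      split_ifs with h
      · exact hDcard
      · simp
    refine ⟨mem_Tup.2 ⟨?_, ?_⟩, ?_, ?_⟩
    · intro i
      split_ifs with h
      · rwa [hDcard]
      · simpa using isDiag_empty k
    · rw [Finset.sum_congr rfl (fun i _ => hcards i), Finset.sum_ite_eq' Finset.univ]
      simp
    · intro i hi
      show (if i = ⟨k - 1, hlst⟩ then D else ∅) = ∅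
      rw [if_neg (fun hh => by rw [hh] at hi; simp at hi)]
    · have hscs : ∀ i : Fin k, sc k (if i = ⟨k - 1, hlst⟩ then D else ∅)
          = if i = ⟨k - 1, hlst⟩ then s else 0 := by
        intro i
        split_ifs with h
        · exact hsc
        · exact sc_empty k
      rw [Finset.sum_congr rfl (fun i _ => hscs i), Finset.sum_ite_eq' Finset.univ]
      simp

noncomputable def sig (k : ℕ) (g : Fin k → Finset (Finset ℕ)) : ℕ →₀ (Fin 2 →₀ ℕ) :=
  Finsupp.onFinset (Finset.range k)
    (fun j => if h : j < k then
      Finsupp.single 0 (g ⟨j, h⟩).card + Finsupp.single 1 (sc k (g ⟨j, h⟩)) else 0)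
    (by
      intro j hj
      rw [Finset.mem_range]
      by_contra hh
      exact hj (dif_neg hh))

lemma sig_apply_lt {k : ℕ} (g : Fin k → Finset (Finset ℕ)) {j : ℕ} (h : j < k) :
    sig k g j = Finsupp.single 0 (g ⟨j, h⟩).card + Finsupp.single 1 (sc k (g ⟨j, h⟩)) := by
  simp [sig, h]

lemma sig_apply_ge {k : ℕ} (g : Fin k → Finset (Finset ℕ)) {j : ℕ} (h : k ≤ j) :
    sig k g j = 0 := by
  simp [sig, Nat.not_lt.2 h]

lemma fin2_decomp (d : Fin 2 →₀ ℕ) :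
    d = Finsupp.single 0 (d 0) + Finsupp.single 1 (d 1) := by
  ext x
  have hx : x = 0 ∨ x = 1 := by omega
  rcases hx with rfl | rfl <;> simp [Finsupp.single_apply]

noncomputable def scc (k : ℕ) (g : Fin k → Finset (Finset ℕ)) : ℕ → ℕ :=
  fun i => if h : i < k then sc k (g ⟨i, h⟩) else 0

lemma sum_scc {k : ℕ} (g : Fin k → Finset (Finset ℕ)) :
    ∑ i ∈ Finset.range k, scc k g i = ∑ i : Fin k, sc k (g i) := by
  rw [Finset.sum_range]
  exact Finset.sum_congr rfl (fun i _ => by simp [scc, i.isLt])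

lemma tupp_card {k : ℕ} (hk : 0 < k) (m ℓ : ℕ) (d' : Fin 2 →₀ ℕ)
    (h0 : d' 0 = m) (h1 : d' 1 = ℓ) :
    ((Tup k m).filter (fun g => (∑ i : Fin k, sc k (g i)) = ℓ)).card
      = ∑ l ∈ Finset.finsuppAntidiag (Finset.range k) d',
          ∏ i ∈ Finset.range k, Tcount k (l i 0) (l i 1) := by
  have hmapsto : ∀ g ∈ (Tup k m).filter (fun g => (∑ i : Fin k, sc k (g i)) = ℓ),
      sig k g ∈ Finset.finsuppAntidiag (Finset.range k) d' := by
    intro g hg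
    obtain ⟨hTup, hscsum⟩ := Finset.mem_filter.1 hg
    obtain ⟨hdiag, hsum⟩ := mem_Tup.1 hTup
    rw [Finset.mem_finsuppAntidiag]
    constructor
    · ext x
      rw [Finsupp.finset_sum_apply]
      have hx : x = 0 ∨ x = 1 := by omega
      rcases hx with rfl | rfl
      · rw [h0, ← hsum, ← sum_cc]
        apply Finset.sum_congr rfl
        intro j hj
        have hjk := Finset.mem_range.1 hj
        rw [sig_apply_lt g hjk]
        simp [cc, hjk, Finsupp.single_apply]
      · rw [h1, ← hscsum, ← sum_scc]
        apply Finset.sum_congr rfl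
        intro j hj
        have hjk := Finset.mem_range.1 hj
        rw [sig_apply_lt g hjk]
        simp [scc, hjk, Finsupp.single_apply]
    · intro j hj
      rw [Finsupp.mem_support_iff] at hj
      rw [Finset.mem_range]
      by_contra hh
      exact hj (sig_apply_ge g (by omega))
  rw [Finset.card_eq_sum_card_fiberwise hmapsto]
  apply Finset.sum_congr rfl
  intro l hl
  obtain ⟨hlsum, hlsupp⟩ := Finset.mem_finsuppAntidiag.1 hl
  have hl0 : ∑ j ∈ Finset.range k, l j 0 = m := by
    have := DFunLike.congr_fun hlsum (0 : Fin 2)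
    rw [Finsupp.finset_sum_apply] at this
    rw [this, h0]
  have hl1 : ∑ j ∈ Finset.range k, l j 1 = ℓ := by
    have := DFunLike.congr_fun hlsum (1 : Fin 2)
    rw [Finsupp.finset_sum_apply] at this
    rw [this, h1]
  have hset : ((Tup k m).filter (fun g => (∑ i : Fin k, sc k (g i)) = ℓ)).filter
        (fun g => sig k g = l)
      = Fintype.piFinset (fun i : Fin k => DS k (k * (l (i : ℕ) 0)) (l (i : ℕ) 1)) := by
    ext g
    rw [Finset.mem_filter, Finset.mem_filter, Fintype.mem_piFinset]
    constructor
    · rintro ⟨⟨hTup, hscsum⟩, hsig⟩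
      intro i
      obtain ⟨hdiag, hsum⟩ := mem_Tup.1 hTup
      have hli : l (i : ℕ) = Finsupp.single 0 (g i).card + Finsupp.single 1 (sc k (g i)) := by
        rw [← hsig, sig_apply_lt g i.isLt]
      have hv0 : l (i : ℕ) 0 = (g i).card := by rw [hli]; simp [Finsupp.single_apply]
      have hv1 : l (i : ℕ) 1 = sc k (g i) := by rw [hli]; simp [Finsupp.single_apply]
      refine mem_DS.2 ⟨?_, hv1.symm⟩
      rw [hv0]
      exact hdiag i
    · intro hall
      have hcards : ∀ i : Fin k, (g i).card = l (i : ℕ) 0 :=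
        fun i => ((mem_DS.1 (hall i)).1).card_eq hk
      have hscs : ∀ i : Fin k, sc k (g i) = l (i : ℕ) 1 := fun i => (mem_DS.1 (hall i)).2
      have hdiag : ∀ i, IsDiag k (k * (g i).card) (g i) := by
        intro i
        have h := (mem_DS.1 (hall i)).1
        rw [hcards i]
        exact h
      have hsum : ∑ i : Fin k, (g i).card = m := by
        rw [Finset.sum_congr rfl (fun i _ => hcards i), ← Finset.sum_range
          (fun j => l j 0), hl0]
      have hss : ∑ i : Fin k, sc k (g i) = ℓ := by
        rw [Finset.sum_congr rfl (fun i _ => hscs i), ← Finset.sum_range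
          (fun j => l j 1), hl1]
      refine ⟨⟨mem_Tup.2 ⟨hdiag, hsum⟩, hss⟩, ?_⟩
      ext j x
      rcases Nat.lt_or_ge j k with hj | hj
      · rw [sig_apply_lt g hj]
        have hlj : l j = Finsupp.single 0 (l j 0) + Finsupp.single 1 (l j 1) := fin2_decomp _
        rw [hlj]
        have e0 : (g ⟨j, hj⟩).card = l j 0 := by
          have := hcards ⟨j, hj⟩
          simpa using this
        have e1 : sc k (g ⟨j, hj⟩) = l j 1 := by
          have := hscs ⟨j, hj⟩
          simpa using this
        rw [e0, e1]
      · rw [sig_apply_ge g hj]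
        have : l j = 0 := by
          by_contra hh
          have := hlsupp (Finsupp.mem_support_iff.2 hh)
          rw [Finset.mem_range] at this
          omega
        rw [this]
  rw [hset, Fintype.card_piFinset, Finset.prod_range (fun j => Tcount k (l j 0) (l j 1))]
  exact Finset.prod_congr rfl (fun i _ => (tcount_eq hk _ _).symm)

set_option maxHeartbeats 2000000 in
lemma master {k : ℕ} (hk : 0 < k) (m ℓ : ℕ) (d' : Fin 2 →₀ ℕ)
    (h0 : d' 0 = m) (h1 : d' 1 = ℓ) :
    Tcount k (m + 1) ℓ + Tcount k m ℓ =
      (∑ l ∈ Finset.finsuppAntidiag (Finset.range k) d',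
        ∏ i ∈ Finset.range k, Tcount k (l i 0) (l i 1))
        + (if ℓ = 0 then 0 else Tcount k m (ℓ - 1)) := by
  classical
  have hsplitA :
      (((Tup k m).filter (fun g => (∑ i : Fin k, sc k (g i)) +
          (if (∀ i : Fin k, (i : ℕ) < k - 1 → g i = ∅) then 1 else 0) = ℓ)).filter
        (fun g => (∀ i : Fin k, (i : ℕ) < k - 1 → g i = ∅))).card +
      (((Tup k m).filter (fun g => (∑ i : Fin k, sc k (g i)) +
          (if (∀ i : Fin k, (i : ℕ) < k - 1 → g i = ∅) then 1 else 0) = ℓ)).filter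
        (fun g => ¬ (∀ i : Fin k, (i : ℕ) < k - 1 → g i = ∅))).card =
      ((Tup k m).filter (fun g => (∑ i : Fin k, sc k (g i)) +
          (if (∀ i : Fin k, (i : ℕ) < k - 1 → g i = ∅) then 1 else 0) = ℓ)).card :=
    Finset.card_filter_add_card_filter_not
      (fun g : Fin k → Finset (Finset ℕ) => (∀ i : Fin k, (i : ℕ) < k - 1 → g i = ∅))
  have hsplitT :
      (((Tup k m).filter (fun g => (∑ i : Fin k, sc k (g i)) = ℓ)).filter
        (fun g => (∀ i : Fin k, (i : ℕ) < k - 1 → g i = ∅))).card +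
      (((Tup k m).filter (fun g => (∑ i : Fin k, sc k (g i)) = ℓ)).filter
        (fun g => ¬ (∀ i : Fin k, (i : ℕ) < k - 1 → g i = ∅))).card =
      ((Tup k m).filter (fun g => (∑ i : Fin k, sc k (g i)) = ℓ)).card :=
    Finset.card_filter_add_card_filter_not
      (fun g : Fin k → Finset (Finset ℕ) => (∀ i : Fin k, (i : ℕ) < k - 1 → g i = ∅))
  have hA0 :
      ((Tup k m).filter (fun g => (∑ i : Fin k, sc k (g i)) +
          (if (∀ i : Fin k, (i : ℕ) < k - 1 → g i = ∅) then 1 else 0) = ℓ)).filter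
        (fun g => ¬ (∀ i : Fin k, (i : ℕ) < k - 1 → g i = ∅)) =
      ((Tup k m).filter (fun g => (∑ i : Fin k, sc k (g i)) = ℓ)).filter
        (fun g => ¬ (∀ i : Fin k, (i : ℕ) < k - 1 → g i = ∅)) := by
    ext g
    simp only [Finset.mem_filter]
    constructor
    · rintro ⟨⟨hgT, hcond⟩, hnd⟩
      rw [if_neg hnd] at hcond
      exact ⟨⟨hgT, by rw [Nat.add_zero] at hcond; exact hcond⟩, hnd⟩
    · rintro ⟨⟨hgT, hcond⟩, hnd⟩
      refine ⟨⟨hgT, ?_⟩, hnd⟩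
      rw [if_neg hnd, Nat.add_zero]
      exact hcond
  have hA1 :
      (((Tup k m).filter (fun g => (∑ i : Fin k, sc k (g i)) +
          (if (∀ i : Fin k, (i : ℕ) < k - 1 → g i = ∅) then 1 else 0) = ℓ)).filter
        (fun g => (∀ i : Fin k, (i : ℕ) < k - 1 → g i = ∅))).card =
      (if ℓ = 0 then 0 else Tcount k m (ℓ - 1)) := by
    rcases Nat.eq_zero_or_pos ℓ with rfl | hℓ
    · rw [if_pos rfl, Finset.card_eq_zero, Finset.filter_eq_empty_iff]
      intro g hg hd
      obtain ⟨-, hcond⟩ := Finset.mem_filter.1 hg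
      rw [if_pos hd] at hcond
      exact Nat.succ_ne_zero _ hcond
    · rw [if_neg (Nat.pos_iff_ne_zero.mp hℓ), ← dlt_filter_card hk m (ℓ - 1)]
      congr 1
      ext g
      simp only [Finset.mem_filter]
      constructor
      · rintro ⟨⟨hgT, hcond⟩, hd⟩
        exact ⟨hgT, hd, Nat.eq_sub_of_add_eq (by rw [if_pos hd] at hcond; exact hcond)⟩
      · rintro ⟨hgT, hd, hcond⟩
        refine ⟨⟨hgT, ?_⟩, hd⟩
        rw [if_pos hd, hcond]
        exact Nat.succ_pred_eq_of_pos hℓ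
  have hT1 :
      (((Tup k m).filter (fun g => (∑ i : Fin k, sc k (g i)) = ℓ)).filter
        (fun g => (∀ i : Fin k, (i : ℕ) < k - 1 → g i = ∅))).card = Tcount k m ℓ := by
    rw [← dlt_filter_card hk m ℓ]
    congr 1
    ext g
    simp only [Finset.mem_filter]
    exact ⟨fun ⟨⟨a, b⟩, c2⟩ => ⟨a, c2, b⟩, fun ⟨a, c2, b⟩ => ⟨⟨a, b⟩, c2⟩⟩
  have hAcard := tcount_succ hk m ℓ
  have hTpcard := tupp_card hk m ℓ d' h0 h1
  rw [hA0] at hsplitA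
  rw [hAcard, ← hA1, ← hT1, ← hTpcard, ← hsplitA, ← hsplitT]
  ring

lemma tcount_zero {k : ℕ} (hk : 0 < k) (ℓ : ℕ) :
    Tcount k 0 ℓ = if ℓ = 0 then 1 else 0 := by
  rw [tcount_eq hk]
  have hDS : DS k (k * 0) ℓ = if ℓ = 0 then {∅} else ∅ := by
    ext F
    rw [mem_DS]
    constructor
    · rintro ⟨hdiag, hsc⟩
      have hF : F = ∅ := by
        rw [Finset.eq_empty_iff_forall_notMem]
        intro B hB
        have h1 := blocks_subset hdiag hB
        rw [Nat.mul_zero, Finset.range_zero, Finset.subset_empty] at h1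
        have h2 := hdiag.1 B hB
        rw [h1] at h2
        simp at h2
        omega
      subst hF
      rw [sc_empty] at hsc
      rw [if_pos hsc.symm]
      simp
    · intro hF
      by_cases hℓ : ℓ = 0
      · rw [if_pos hℓ, Finset.mem_singleton] at hF
        subst hF
        subst hℓ
        exact ⟨by simpa using isDiag_empty k, sc_empty k⟩
      · rw [if_neg hℓ] at hF
        simp at hF
  rw [hDS]
  split_ifs <;> simp

end Count

/-- The functional equation `T(x,y) - 1 = x T(x,y)^k - x(1-y) T(x,y)`. -/
theorem stmt15 (k : ℕ) (hk : 1 ≤ k) :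
    Tser k - 1 =
      MvPowerSeries.X 0 * (Tser k) ^ k -
        MvPowerSeries.X 0 * (1 - MvPowerSeries.X 1) * Tser k := by
  classical
  have hk0 : 0 < k := hk
  apply MvPowerSeries.ext
  intro d
  have hcT : ∀ e : Fin 2 →₀ ℕ, MvPowerSeries.coeff e (Tser k) = (Tcount k (e 0) (e 1) : ℚ) :=
    fun e => rfl
  have hsub : MvPowerSeries.X (R := ℚ) 0 * (1 - MvPowerSeries.X 1) * Tser k
      = MvPowerSeries.X 0 * Tser k - (MvPowerSeries.X 0 * MvPowerSeries.X 1) * Tser k := by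
    ring
  have hX0 : ∀ φ : MvPowerSeries (Fin 2) ℚ,
      MvPowerSeries.coeff d (MvPowerSeries.X 0 * φ)
      = if Finsupp.single 0 1 ≤ d then
          MvPowerSeries.coeff (d - Finsupp.single 0 1) φ else 0 := by
    intro φ
    rw [MvPowerSeries.X_def, MvPowerSeries.coeff_monomial_mul]
    simp only [one_mul]
  have hXX : ∀ φ : MvPowerSeries (Fin 2) ℚ,
      MvPowerSeries.coeff d (MvPowerSeries.X 0 * MvPowerSeries.X 1 * φ)
      = if (Finsupp.single 0 1 + Finsupp.single 1 1 : Fin 2 →₀ ℕ) ≤ d then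
          MvPowerSeries.coeff (d - (Finsupp.single 0 1 + Finsupp.single 1 1)) φ else 0 := by
    intro φ
    rw [MvPowerSeries.X_def, MvPowerSeries.X_def, MvPowerSeries.monomial_mul_monomial,
      one_mul, MvPowerSeries.coeff_monomial_mul]
    simp only [one_mul]
  rw [map_sub, map_sub, hsub, map_sub, hcT, MvPowerSeries.coeff_one,
    hX0 (Tser k ^ k), hX0 (Tser k), hXX (Tser k)]
  by_cases h0 : d 0 = 0
  · have c1 : ¬ Finsupp.single 0 1 ≤ d := by
      rw [Finsupp.single_le_iff]
      omega
    have c2 : ¬ ((Finsupp.single 0 1 + Finsupp.single 1 1 : Fin 2 →₀ ℕ) ≤ d) := by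
      intro hc
      have := Finsupp.le_def.1 hc 0
      simp [Finsupp.single_apply] at this
      omega
    rw [if_neg c1, if_neg c1, if_neg c2, h0, tcount_zero hk0]
    have hd0 : (d = 0) ↔ (d 1 = 0) := by
      constructor
      · intro h
        rw [h]
        simp
      · intro h
        ext x
        have hx : x = 0 ∨ x = 1 := by omega
        rcases hx with rfl | rfl
        · simp [h0]
        · simp [h]
    by_cases h1 : d 1 = 0
    · rw [if_pos h1, if_pos (hd0.2 h1)]
      norm_num
    · rw [if_neg h1, if_neg (fun hh => h1 (hd0.1 hh))]
      norm_num
  · have c1 : Finsupp.single 0 1 ≤ d := by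
      rw [Finsupp.single_le_iff]
      omega
    rw [if_pos c1, if_pos c1, MvPowerSeries.coeff_pow]
    have he0 : (d - Finsupp.single 0 1 : Fin 2 →₀ ℕ) 0 = d 0 - 1 := by
      rw [Finsupp.tsub_apply]
      simp
    have he1 : (d - Finsupp.single 0 1 : Fin 2 →₀ ℕ) 1 = d 1 := by
      rw [Finsupp.tsub_apply]
      simp [Finsupp.single_apply]
    have hmaster := master hk0 (d 0 - 1) (d 1) (d - Finsupp.single 0 1) he0 he1
    have hd00 : d 0 - 1 + 1 = d 0 := by omega
    rw [hd00] at hmaster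
    have hsums : ∑ l ∈ Finset.finsuppAntidiag (Finset.range k)
          (d - Finsupp.single 0 1 : Fin 2 →₀ ℕ),
        ∏ i ∈ Finset.range k, MvPowerSeries.coeff (l i) (Tser k)
        = ((∑ l ∈ Finset.finsuppAntidiag (Finset.range k)
            (d - Finsupp.single 0 1 : Fin 2 →₀ ℕ),
            ∏ i ∈ Finset.range k, Tcount k (l i 0) (l i 1) : ℕ) : ℚ) := by
      push_cast
      exact Finset.sum_congr rfl (fun l _ => Finset.prod_congr rfl (fun i _ => rfl))
    rw [hsums, hcT, he0, he1]
    rw [if_neg (show ¬ d = 0 from fun hh => h0 (by rw [hh]; rfl))]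
    by_cases h1 : d 1 = 0
    · have c2 : ¬ ((Finsupp.single 0 1 + Finsupp.single 1 1 : Fin 2 →₀ ℕ) ≤ d) := by
        intro hc
        have := Finsupp.le_def.1 hc 1
        simp [Finsupp.single_apply] at this
        omega
      rw [if_neg c2]
      rw [if_pos h1] at hmaster
      have hmq := congrArg (fun z : ℕ => (z : ℚ)) hmaster
      push_cast at hmq ⊢
      linarith only [hmq]
    · have c2 : ((Finsupp.single 0 1 + Finsupp.single 1 1 : Fin 2 →₀ ℕ) ≤ d) := by
        rw [Finsupp.le_def]
        intro x
        have hx : x = 0 ∨ x = 1 := by omega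
        rcases hx with rfl | rfl <;> simp [Finsupp.single_apply] <;> omega
      rw [if_pos c2, hcT]
      have hf0 : (d - (Finsupp.single 0 1 + Finsupp.single 1 1) : Fin 2 →₀ ℕ) 0 = d 0 - 1 := by
        rw [Finsupp.tsub_apply]
        simp [Finsupp.single_apply]
      have hf1 : (d - (Finsupp.single 0 1 + Finsupp.single 1 1) : Fin 2 →₀ ℕ) 1 = d 1 - 1 := by
        rw [Finsupp.tsub_apply]
        simp [Finsupp.single_apply]
      rw [hf0, hf1]
      rw [if_neg h1] at hmaster
      have hmq := congrArg (fun z : ℕ => (z : ℚ)) hmaster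
      push_cast at hmq ⊢
      linarith only [hmq]
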